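/- Dhar's formula: for the Abelian sandpile model on finite V ⊂ Z^d, with μ_V the uniform measure on recurrent configurations R_V and N_V(x,y,η) the number of topplings at y when a grain is added at x to η and the result is stabilized, one has E_{μ_V}[N_V(x,y,·)] = (Δ_V^{-1})_{xy}. -/

import Mathlib

/- The Abelian sandpile model on ℤ^d.  Sites are `Fin d → ℤ`; the toppling matrix is
`Δ_{xx} = 2d`, `Δ_{xy} = -1` for nearest neighbours, `0` otherwise.  Toppling in volume `V`
uses the matrix restricted to `V` (grains leaving `V` disappear).  `LegalSeq V η l η'`
says that `l` is a sequence of legal topplings in `V` taking `η` to `η'`. -/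

open scoped Classical

abbrev Site (d : ℕ) := Fin d → ℤ

def adjacent {d : ℕ} (x y : Site d) : Prop := (∑ i, |x i - y i|) = 1

noncomputable def lap (d : ℕ) (x y : Site d) : ℤ :=
  if x = y then 2 * d else if adjacent x y then -1 else 0

abbrev Config (d : ℕ) := Site d → ℤ

noncomputable def lapV {d : ℕ} (V : Finset (Site d)) (x y : Site d) : ℤ :=
  if x ∈ V ∧ y ∈ V then lap d x y else 0

noncomputable def topple {d : ℕ} (V : Finset (Site d)) (x : Site d) (η : Config d) :
    Config d := fun y => η y - lapV V x y

def Stable {d : ℕ} (V : Finset (Site d)) (η : Config d) : Prop := ∀ x ∈ V, η x ≤ 2 * d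

/-- `l` is a sequence of legal topplings in volume `V` carrying `η` to `η'`. -/
def LegalSeq {d : ℕ} (V : Finset (Site d)) : Config d → List (Site d) → Config d → Prop
  | η, [], η' => η' = η
  | η, x :: l, η' => x ∈ V ∧ (2 * d : ℤ) < η x ∧ LegalSeq V (topple V x η) l η'

noncomputable def addGrain {d : ℕ} (x : Site d) (η : Config d) : Config d :=
  fun y => if y = x then η y + 1 else η y


/-- The height (in `{1,…,2d}`) of a configuration encoded with values in `Fin (2d)`. -/
def heightOf {d : ℕ} {V : Finset (Site d)} (η : {x // x ∈ V} → Fin (2 * d))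
    (z : {x // x ∈ V}) : ℤ := (η z : ℤ) + 1

/-- A configuration on `V` is recurrent iff it contains no forbidden subconfiguration. -/
def RecurrentOn {d : ℕ} (V : Finset (Site d)) (η : {x // x ∈ V} → Fin (2 * d)) : Prop :=
  ∀ S : Finset {x // x ∈ V}, S.Nonempty →
    ∃ x ∈ S, ¬ (heightOf η x ≤ -∑ y ∈ S.erase x, lap d x.1 y.1)

/-- Extend a configuration on `V` (heights in `{1,…,2d}`) to a configuration on all of `ℤ^d`. -/
noncomputable def toConfig {d : ℕ} {V : Finset (Site d)}
    (η : {x // x ∈ V} → Fin (2 * d)) : Config d :=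
  fun z => if h : z ∈ V then (η ⟨z, h⟩ : ℤ) + 1 else 0

/-- The toppling matrix restricted to `V`, over `ℝ`. -/
noncomputable def lapMatR {d : ℕ} (V : Finset (Site d)) :
    Matrix {x // x ∈ V} {x // x ∈ V} ℝ := fun a b => ((lap d a.1 b.1 : ℤ) : ℝ)

section Basic
variable {d : ℕ}

lemma adjacent_symm {x y : Site d} (h : adjacent x y) : adjacent y x := by
  unfold adjacent at *
  simpa [abs_sub_comm] using h

lemma not_adjacent_self (x : Site d) : ¬ adjacent x x := by
  unfold adjacent; simp

lemma adjacent_iff {x y : Site d} :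
    adjacent x y ↔ ∃ i : Fin d, (y i - x i = 1 ∨ y i - x i = -1) ∧ ∀ j, j ≠ i → y j = x j := by
  constructor
  · intro h
    unfold adjacent at h
    have hne : ∃ i, |x i - y i| ≠ 0 := by
      by_contra hc
      push_neg at hc
      simp only [hc, Finset.sum_const_zero] at h
      exact one_ne_zero h.symm
    obtain ⟨i, hi⟩ := hne
    have h1 : 1 ≤ |x i - y i| := by
      have := abs_nonneg (x i - y i); omega
    have hbnn : 0 ≤ ∑ j ∈ Finset.univ.erase i, |x j - y j| :=
      Finset.sum_nonneg (fun j _ => abs_nonneg _)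
    rw [← Finset.add_sum_erase _ _ (Finset.mem_univ i)] at h
    have hrest : ∑ j ∈ Finset.univ.erase i, |x j - y j| = 0 := by omega
    have habs : |x i - y i| = 1 := by omega
    have hz : ∀ j ∈ Finset.univ.erase i, |x j - y j| = 0 := by
      intro j hj
      have hnn : ∀ j ∈ Finset.univ.erase i, 0 ≤ |x j - y j| := fun j _ => abs_nonneg _
      exact (Finset.sum_eq_zero_iff_of_nonneg hnn).1 hrest j hj
    refine ⟨i, ?_, ?_⟩
    · have : |x i - y i| = 1 := by
        have := Finset.add_sum_erase Finset.univ (fun j => |x j - y j|) (Finset.mem_univ i)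
        omega
      rcases abs_eq (by norm_num : (0:ℤ) ≤ 1) |>.1 this with h' | h' <;> omega
    · intro j hj
      have := hz j (Finset.mem_erase.2 ⟨hj, Finset.mem_univ j⟩)
      have := abs_eq_zero.1 this
      omega
  · rintro ⟨i, hi, hrest⟩
    unfold adjacent
    rw [Finset.sum_eq_single_of_mem i (Finset.mem_univ i)]
    · rcases hi with h' | h' <;> (rw [abs_eq (by norm_num : (0:ℤ) ≤ 1)]; omega)
    · intro j _ hj
      have := hrest j hj
      simp [this]

lemma lap_self {x : Site d} : lap d x x = 2 * d := by simp [lap]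

lemma lap_of_ne {x y : Site d} (h : x ≠ y) :
    lap d x y = if adjacent x y then -1 else 0 := by simp [lap, h]

lemma lap_offdiag_nonpos {x y : Site d} (h : x ≠ y) : lap d x y ≤ 0 := by
  rw [lap_of_ne h]; split <;> norm_num

lemma lap_symm (x y : Site d) : lap d x y = lap d y x := by
  unfold lap
  by_cases h : x = y
  · simp [h]
  · have h' : ¬ y = x := fun hc => h hc.symm
    simp only [h, h', if_false]
    by_cases ha : adjacent x y
    · simp [ha, adjacent_symm ha]
    · have : ¬ adjacent y x := fun hc => ha (adjacent_symm hc)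
      simp [ha, this]

/-- the "step" in direction of the first coordinate -/
noncomputable def step {d : ℕ} (hd : 0 < d) (z : Site d) : Site d :=
  Function.update z ⟨0, hd⟩ (z ⟨0, hd⟩ + 1)

lemma adjacent_step (hd : 0 < d) (z : Site d) : adjacent z (step hd z) := by
  rw [adjacent_iff]
  refine ⟨⟨0, hd⟩, ?_, ?_⟩
  · left; simp [step]
  · intro j hj; simp [step, Function.update_of_ne hj]

lemma step_ne (hd : 0 < d) (z : Site d) : step hd z ≠ z := by
  intro h
  have := congrFun h ⟨0, hd⟩
  simp [step] at this

/-- no finite nonempty set is closed under `step` -/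
lemma no_step_closed (hd : 0 < d) (T : Finset (Site d)) (hne : T.Nonempty)
    (hcl : ∀ z ∈ T, step hd z ∈ T) : False := by
  obtain ⟨z, hz, hmax⟩ := T.exists_max_image (fun z => z ⟨0, hd⟩) hne
  have h1 := hmax _ (hcl z hz)
  simp [step] at h1

end Basic

section Nbhd
variable {d : ℕ}

/-- the direction data of an adjacency -/
noncomputable def dirData {d : ℕ} (z w : Site d) (h : adjacent z w) : Fin d × Bool :=
  ⟨(adjacent_iff.1 h).choose, decide (z (adjacent_iff.1 h).choose < w (adjacent_iff.1 h).choose)⟩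

lemma dirData_inj {z w w' : Site d} (h : adjacent z w) (h' : adjacent z w')
    (he : dirData z w h = dirData z w' h') : w = w' := by
  obtain ⟨hi, hrest⟩ := (adjacent_iff.1 h).choose_spec
  obtain ⟨hi', hrest'⟩ := (adjacent_iff.1 h').choose_spec
  set i := (adjacent_iff.1 h).choose with hidef
  set i' := (adjacent_iff.1 h').choose with hidef'
  have hii : i = i' := congrArg Prod.fst he
  have hbb : decide (z i < w i) = decide (z i' < w' i') := congrArg Prod.snd he
  clear_value i i'
  subst hii
  funext j
  by_cases hj : j = i
  · subst hj
    rcases hi with h1 | h1 <;> rcases hi' with h2 | h2 <;>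
      first
        | omega
        | (exfalso; simp only [decide_eq_decide] at hbb; omega)
  · rw [hrest j hj, hrest' j hj]

lemma dirData_step (hd : 0 < d) (z : Site d) :
    dirData z (step hd z) (adjacent_step hd z) = (⟨0, hd⟩, true) := by
  have h := adjacent_step hd z
  obtain ⟨hi, hrest⟩ := (adjacent_iff.1 h).choose_spec
  set i := (adjacent_iff.1 h).choose with hidef
  have hieq : i = ⟨0, hd⟩ := by
    by_contra hc
    have h1 := hrest ⟨0, hd⟩ (fun hcc => hc hcc.symm)
    simp [step] at h1
  unfold dirData
  rw [← hidef, hieq]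
  have : z ⟨0, hd⟩ < step hd z ⟨0, hd⟩ := by simp [step]
  simp [this]

/-- any set of sites adjacent to `z` has cardinality at most `2d` -/
lemma card_adj_le (hd : 0 < d) (z : Site d) (A : Finset (Site d))
    (hA : ∀ w ∈ A, adjacent z w) : A.card ≤ 2 * d := by
  classical
  have : A.card ≤ (Finset.univ : Finset (Fin d × Bool)).card := by
    apply Finset.card_le_card_of_injOn (fun w => if h : adjacent z w then dirData z w h else (⟨0, hd⟩, true))
    · intro w _; exact Finset.mem_univ _
    · intro w hw w' hw' he
      have h1 := hA w hw; have h2 := hA w' hw'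
      dsimp only at he
      rw [dif_pos h1, dif_pos h2] at he
      exact dirData_inj h1 h2 he
  have h2 : (Finset.univ : Finset (Fin d × Bool)).card = 2 * d := by
    rw [Finset.card_univ, Fintype.card_prod, Fintype.card_fin, Fintype.card_bool]; ring
  omega

/-- refined: if additionally `step z ∉ A` then at most `2d - 1` -/
lemma card_adj_lt (hd : 0 < d) (z : Site d) (A : Finset (Site d))
    (hA : ∀ w ∈ A, adjacent z w) (hstep : step hd z ∉ A) : A.card < 2 * d := by
  classical
  have : A.card ≤ ((Finset.univ : Finset (Fin d × Bool)).erase (⟨0, hd⟩, true)).card := by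
    apply Finset.card_le_card_of_injOn (fun w => if h : adjacent z w then dirData z w h else (⟨0, hd⟩, true))
    · intro w hw
      have h1 := hA w hw
      dsimp only
      rw [dif_pos h1]
      refine Finset.mem_erase.2 ⟨?_, Finset.mem_univ _⟩
      intro hc
      have : w = step hd z := by
        apply dirData_inj h1 (adjacent_step hd z)
        rw [hc, dirData_step]
      exact hstep (this ▸ hw)
    · intro w hw w' hw' he
      have h1 := hA w hw; have h2 := hA w' hw'
      dsimp only at he
      rw [dif_pos h1, dif_pos h2] at he
      exact dirData_inj h1 h2 he
  have h2 : ((Finset.univ : Finset (Fin d × Bool)).erase (⟨0, hd⟩, true)).card = 2 * d - 1 := by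
    rw [Finset.card_erase_of_mem (Finset.mem_univ _), Finset.card_univ,
      Fintype.card_prod, Fintype.card_fin, Fintype.card_bool]
    omega
  omega

end Nbhd
section Sums
variable {d : ℕ} {V : Finset (Site d)}

lemma filter_adj_erase (V : Finset (Site d)) (z : Site d) :
    (V.erase z).filter (fun w => adjacent z w) = V.filter (fun w => adjacent z w) := by
  ext w
  simp only [Finset.mem_filter, Finset.mem_erase]
  constructor
  · rintro ⟨⟨_, h1⟩, h2⟩; exact ⟨h1, h2⟩
  · rintro ⟨h1, h2⟩
    refine ⟨⟨?_, h1⟩, h2⟩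
    rintro rfl
    exact not_adjacent_self _ h2

lemma sum_lap_split {R : Type*} [CommRing R] (V : Finset (Site d)) {z : Site d} (hz : z ∈ V)
    (c : Site d → R) :
    ∑ w ∈ V, ((lap d z w : ℤ) : R) * c w
      = 2 * d * c z - ∑ w ∈ V.filter (fun w => adjacent z w), c w := by
  rw [← Finset.add_sum_erase _ _ hz]
  have h1 : ((lap d z z : ℤ) : R) = 2 * d := by rw [lap_self]; push_cast; ring
  have h2 : ∑ w ∈ V.erase z, ((lap d z w : ℤ) : R) * c w
      = ∑ w ∈ V.erase z, (if adjacent z w then -c w else 0) := by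
    apply Finset.sum_congr rfl
    intro w hw
    have hne : z ≠ w := fun hc => (Finset.mem_erase.1 hw).1 hc.symm
    rw [lap_of_ne hne]
    split <;> push_cast <;> ring
  rw [h1, h2, Finset.sum_ite, Finset.sum_const_zero, add_zero, filter_adj_erase,
    Finset.sum_neg_distrib]
  ring

lemma sum_map_count (f : Site d → ℤ) (l : List (Site d)) (hl : ∀ a ∈ l, a ∈ V) :
    (l.map f).sum = ∑ w ∈ V, (l.count w : ℤ) * f w := by
  induction l with
  | nil => simp
  | cons a t ih =>
    have ha := hl a (by simp)
    rw [List.map_cons, List.sum_cons, ih (fun b hb => hl b (List.mem_cons_of_mem _ hb))]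
    have hcnt : ∀ w : Site d, (((a :: t).count w : ℤ)) = (t.count w : ℤ) + if w = a then 1 else 0 := by
      intro w
      rw [List.count_cons]
      by_cases h : w = a
      · simp [h]
      · simp [h, Ne.symm h]
    simp only [hcnt]
    have hsplit : ∀ w ∈ V, ((t.count w : ℤ) + if w = a then 1 else 0) * f w
        = (t.count w : ℤ) * f w + if w = a then f w else 0 := by
      intro w _; split <;> ring
    rw [Finset.sum_congr rfl hsplit, Finset.sum_add_distrib, Finset.sum_ite_eq' V a f, if_pos ha]
    ring
end Sums

section Apply
variable {d : ℕ} {V : Finset (Site d)}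

noncomputable def applyList (V : Finset (Site d)) (l : List (Site d)) (η : Config d) :
    Config d := fun z => η z - (l.map (fun w => lapV V w z)).sum

lemma applyList_nil (η : Config d) : applyList V [] η = η := by
  funext z; simp [applyList]

lemma applyList_cons (a : Site d) (l : List (Site d)) (η : Config d) :
    applyList V (a :: l) η = applyList V l (topple V a η) := by
  funext z; simp [applyList, topple]; ring

lemma applyList_perm {l l' : List (Site d)} (h : l.Perm l') (η : Config d) :
    applyList V l η = applyList V l' η := by
  funext z; simp only [applyList]
  rw [(h.map (fun w => lapV V w z)).sum_eq]

lemma legalSeq_applyList {η ξ : Config d} {l : List (Site d)} (h : LegalSeq V η l ξ) :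
    ξ = applyList V l η := by
  induction l generalizing η with
  | nil => rw [applyList_nil]; exact h
  | cons a t ih =>
    obtain ⟨h1, h2, h3⟩ := h
    rw [applyList_cons]
    exact ih h3

lemma legalSeq_mem {η ξ : Config d} {l : List (Site d)} (h : LegalSeq V η l ξ) :
    ∀ a ∈ l, a ∈ V := by
  induction l generalizing η with
  | nil => intro a ha; exact absurd ha List.not_mem_nil
  | cons b t ih =>
    obtain ⟨h1, h2, h3⟩ := h
    intro a ha
    rcases List.mem_cons.1 ha with rfl | ha'
    · exact h1
    · exact ih h3 a ha'

lemma legalSeq_mono {η η' ξ : Config d} {l : List (Site d)} (hle : ∀ z, η z ≤ η' z)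
    (h : LegalSeq V η l ξ) : LegalSeq V η' l (applyList V l η') := by
  induction l generalizing η η' with
  | nil => show applyList V [] η' = η'; exact applyList_nil η'
  | cons a t ih =>
    obtain ⟨h1, h2, h3⟩ := h
    refine ⟨h1, lt_of_lt_of_le h2 (hle a), ?_⟩
    rw [applyList_cons]
    exact ih (fun z => by simp [topple]; linarith [hle z]) h3

lemma legalSeq_append {η ξ ζ : Config d} {l l' : List (Site d)}
    (h : LegalSeq V η l ξ) (h' : LegalSeq V ξ l' ζ) : LegalSeq V η (l ++ l') ζ := by
  induction l generalizing η with
  | nil => rw [List.nil_append]; rw [h] at h'; exact h'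
  | cons a t ih =>
    obtain ⟨h1, h2, h3⟩ := h
    exact ⟨h1, h2, ih h3⟩

lemma topple_addGrain (a x : Site d) (η : Config d) :
    topple V a (addGrain x η) = addGrain x (topple V a η) := by
  funext z; simp only [topple, addGrain]
  by_cases h : z = x <;> simp [h] <;> ring

lemma legalSeq_addGrain {η ξ : Config d} {l : List (Site d)} (x : Site d)
    (h : LegalSeq V η l ξ) : LegalSeq V (addGrain x η) l (addGrain x ξ) := by
  induction l generalizing η with
  | nil => show addGrain x ξ = addGrain x η; rw [show ξ = η from h]
  | cons a t ih =>
    obtain ⟨h1, h2, h3⟩ := h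
    refine ⟨h1, ?_, ?_⟩
    · have : η a ≤ addGrain x η a := by simp only [addGrain]; split <;> omega
      omega
    · rw [topple_addGrain]
      exact ih h3

lemma lapV_nonpos {w z : Site d} (h : w ≠ z) : lapV V w z ≤ 0 := by
  unfold lapV
  split
  · exact lap_offdiag_nonpos h
  · exact le_refl 0

lemma least_action {l' : List (Site d)} :
    ∀ {η ξ' : Config d} {l : List (Site d)}, LegalSeq V η l' ξ' → (∀ a ∈ l, a ∈ V) →
      Stable V (applyList V l η) → ∀ z, l'.count z ≤ l.count z := by
  induction l' with
  | nil => intro η ξ' l _ _ _ z; simp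
  | cons a r ih =>
    intro η ξ' l h hlV hstab z
    obtain ⟨haV, hgt, hrest⟩ := h
    have hal : a ∈ l := by
      by_contra hc
      have h0 : applyList V l η a = η a - (l.map (fun w => lapV V w a)).sum := rfl
      have hsum : (l.map (fun w => lapV V w a)).sum ≤ 0 := by
        have : ∀ (L : List ℤ), (∀ q ∈ L, q ≤ 0) → L.sum ≤ 0 := by
          intro L
          induction L with
          | nil => intro _; simp
          | cons q t ihq =>
            intro hq
            rw [List.sum_cons]
            have h1 := hq q (by simp)
            have h2 := ihq (fun p hp => hq p (List.mem_cons_of_mem _ hp))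
            omega
        apply this
        intro q hq
        obtain ⟨w, hw, rfl⟩ := List.mem_map.1 hq
        exact lapV_nonpos (fun hc' => hc (hc' ▸ hw))
      have := hstab a haV
      omega
    have hperm : l.Perm (a :: l.erase a) := List.perm_cons_erase hal
    have happ : applyList V l η = applyList V (l.erase a) (topple V a η) := by
      rw [applyList_perm hperm, applyList_cons]
    have hiH := ih hrest (fun b hb => hlV b (List.mem_of_mem_erase hb)) (happ ▸ hstab)
    have hc1 : r.count z ≤ (l.erase a).count z := hiH z
    rcases eq_or_ne z a with rfl | hzz
    · have hpos : 0 < l.count z := List.count_pos_iff.2 hal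
      have hc2 : (l.erase z).count z = l.count z - 1 := List.count_erase_self
      have hc3 : (z :: r).count z = r.count z + 1 := List.count_cons_self
      omega
    · have hc2 : (l.erase a).count z = l.count z := List.count_erase_of_ne hzz
      have hc3 : (a :: r).count z = r.count z := List.count_cons_of_ne hzz.symm
      omega

end Apply
section Allowed
variable {d : ℕ} {V : Finset (Site d)}

/-- no forbidden subconfiguration (for a general integer configuration) -/
def Allowed (V : Finset (Site d)) (η : Config d) : Prop :=
  ∀ S : Finset (Site d), ↑S ⊆ (V : Set (Site d)) → S.Nonempty →
    ∃ z ∈ S, ¬ (η z ≤ -∑ w ∈ S.erase z, lap d z w)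

lemma allowed_mono {η η' : Config d} (hle : ∀ z, η z ≤ η' z) (h : Allowed V η) :
    Allowed V η' := by
  intro S hS hne
  obtain ⟨z, hz, hb⟩ := h S hS hne
  exact ⟨z, hz, fun hc => hb (le_trans (hle z) hc)⟩

lemma allowed_one_le {η : Config d} (h : Allowed V η) : ∀ z ∈ V, 1 ≤ η z := by
  intro z hz
  obtain ⟨w, hw, hb⟩ := h {z}
    (by rw [Finset.coe_singleton]; exact Set.singleton_subset_iff.2 hz)
    (Finset.singleton_nonempty z)
  rw [Finset.mem_singleton] at hw
  subst hw
  simp only [Finset.erase_singleton, Finset.sum_empty, neg_zero] at hb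
  omega

lemma allowed_topple {η : Config d} {a : Site d} (haV : a ∈ V) (hgt : (2 * d : ℤ) < η a)
    (h : Allowed V η) : Allowed V (topple V a η) := by
  intro S hS hne
  by_cases haS : a ∈ S
  · by_cases hsing : S = {a}
    · refine ⟨a, haS, ?_⟩
      subst hsing
      simp only [Finset.erase_singleton, Finset.sum_empty, neg_zero]
      show ¬ (η a - lapV V a a ≤ 0)
      rw [lapV, if_pos (And.intro haV haV), lap_self]
      omega
    · have hne' : (S.erase a).Nonempty := by
        rw [Finset.nonempty_iff_ne_empty]
        intro hc
        rcases (Finset.erase_eq_empty_iff S a).1 hc with h' | h'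
        · exact hne.ne_empty h'
        · exact hsing h'
      obtain ⟨z, hz, hb⟩ := h (S.erase a)
        (le_trans (Finset.coe_subset.2 (Finset.erase_subset a S)) hS) hne'
      have hzS : z ∈ S := Finset.mem_of_mem_erase hz
      have hza : z ≠ a := Finset.ne_of_mem_erase hz
      have hzV : z ∈ V := hS (Finset.mem_coe.2 hzS)
      refine ⟨z, hzS, ?_⟩
      have haez : a ∈ S.erase z := Finset.mem_erase.2 ⟨fun hc => hza hc.symm, haS⟩
      have hsum : ∑ w ∈ S.erase z, lap d z w
          = lap d z a + ∑ w ∈ (S.erase a).erase z, lap d z w := by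
        rw [← Finset.add_sum_erase _ _ haez, Finset.erase_right_comm]
      have htop : topple V a η z = η z - lap d z a := by
        show η z - lapV V a z = η z - lap d z a
        rw [lapV, if_pos (And.intro haV hzV), lap_symm a z]
      rw [htop, hsum]
      intro hc
      apply hb
      omega
  · obtain ⟨z, hz, hb⟩ := h S hS hne
    refine ⟨z, hz, fun hc => hb ?_⟩
    have hza : a ≠ z := fun hc' => haS (hc' ▸ hz)
    have : η z ≤ topple V a η z := by
      simp only [topple]
      have := lapV_nonpos (V := V) hza
      omega
    omega

end Allowed

section Trans
variable {d : ℕ} {V : Finset (Site d)}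

lemma allowed_legalSeq {η ξ : Config d} {l : List (Site d)} (h : LegalSeq V η l ξ)
    (ha : Allowed V η) : Allowed V ξ := by
  induction l generalizing η with
  | nil => rw [show ξ = η from h]; exact ha
  | cons a t ih =>
    obtain ⟨h1, h2, h3⟩ := h
    exact ih h3 (allowed_topple h1 h2 ha)

lemma allowed_addGrain {η : Config d} (x : Site d) (h : Allowed V η) :
    Allowed V (addGrain x η) := by
  apply allowed_mono _ h
  intro z
  simp only [addGrain]
  split <;> omega

/-- the embedding of subtype finsets into site finsets -/
noncomputable def embV (V : Finset (Site d)) : {x // x ∈ V} ↪ Site d :=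
  Function.Embedding.subtype (fun x => x ∈ V)

lemma toConfig_coe (η : {x // x ∈ V} → Fin (2 * d)) (z : {x // x ∈ V}) :
    toConfig η z.1 = (η z : ℤ) + 1 := by
  simp only [toConfig, dif_pos z.2]

lemma recurrentOn_iff_allowed (η : {x // x ∈ V} → Fin (2 * d)) :
    RecurrentOn V η ↔ Allowed V (toConfig η) := by
  constructor
  · intro h S hS hne
    set S' : Finset {x // x ∈ V} := S.subtype (· ∈ V) with hS'
    have hmap : S'.map (embV V) = S := by
      rw [hS', embV, Finset.subtype_map]
      apply Finset.filter_true_of_mem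
      intro z hz
      exact hS (Finset.mem_coe.2 hz)
    have hne' : S'.Nonempty := by
      obtain ⟨z, hz⟩ := hne
      exact ⟨⟨z, hS (Finset.mem_coe.2 hz)⟩, by simp [hS', Finset.mem_subtype, hz]⟩
    obtain ⟨a, ha, hb⟩ := h S' hne'
    refine ⟨a.1, by rw [← hmap]; exact Finset.mem_map_of_mem _ ha, ?_⟩
    have hsum : ∑ w ∈ S.erase a.1, lap d a.1 w = ∑ y ∈ S'.erase a, lap d a.1 y.1 := by
      rw [← hmap,
        show (Finset.map (embV V) S').erase a.1 = (S'.erase a).map (embV V) from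
          (Finset.map_erase (embV V) S' a).symm,
        Finset.sum_map]
      rfl
    rw [hsum]
    have hh : toConfig η a.1 = heightOf η a := toConfig_coe η a
    rw [hh]
    exact hb
  · intro h S' hne'
    set S : Finset (Site d) := S'.map (embV V) with hSdef
    have hsub : ↑S ⊆ (V : Set (Site d)) := by
      intro z hz
      rw [hSdef] at hz
      obtain ⟨a, _, rfl⟩ := Finset.mem_map.1 (Finset.mem_coe.1 hz)
      exact Finset.mem_coe.2 a.2
    have hne : S.Nonempty := by
      obtain ⟨a, ha⟩ := hne'
      exact ⟨a.1, by rw [hSdef]; exact Finset.mem_map_of_mem _ ha⟩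
    obtain ⟨z, hz, hb⟩ := h S hsub hne
    rw [hSdef] at hz
    obtain ⟨a, ha, rfl⟩ := Finset.mem_map.1 hz
    refine ⟨a, ha, ?_⟩
    have hsum : ∑ w ∈ S.erase (embV V a), lap d ((embV V) a) w
        = ∑ y ∈ S'.erase a, lap d a.1 y.1 := by
      rw [hSdef,
        show (Finset.map (embV V) S').erase (embV V a) = (S'.erase a).map (embV V) from
          (Finset.map_erase (embV V) S' a).symm,
        Finset.sum_map]
      rfl
    rw [hsum] at hb
    have hh : toConfig η ((embV V) a) = heightOf η a := toConfig_coe η a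
    rw [hh] at hb
    exact hb

/-- encode an integer configuration with heights in `{1,…,2d}` back into `Fin (2d)` -/
noncomputable def encV {d : ℕ} (hd : 0 < d) (V : Finset (Site d)) (ξ : Config d) :
    {x // x ∈ V} → Fin (2 * d) :=
  fun z => ⟨(ξ z.1 - 1).toNat % (2 * d), Nat.mod_lt _ (by omega)⟩

lemma toConfig_encV (hd : 0 < d) {ξ : Config d} (h1 : ∀ z ∈ V, 1 ≤ ξ z) (h2 : Stable V ξ)
    (h3 : ∀ z, z ∉ V → ξ z = 0) : toConfig (encV hd V ξ) = ξ := by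
  funext z
  by_cases hz : z ∈ V
  · have ha := h1 z hz
    have hb := h2 z hz
    have hlt : (ξ z - 1).toNat < 2 * d := by omega
    simp only [toConfig, dif_pos hz, encV, Nat.mod_eq_of_lt hlt]
    omega
  · simp only [toConfig, dif_neg hz]
    exact (h3 z hz).symm

lemma toConfig_inj {η η' : {x // x ∈ V} → Fin (2 * d)} (h : toConfig η = toConfig η') :
    η = η' := by
  funext z
  have := congrFun h z.1
  rw [toConfig_coe, toConfig_coe] at this
  have : (η z : ℤ) = (η' z : ℤ) := by omega
  exact Fin.ext (by exact_mod_cast this)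

lemma toConfig_stable (η : {x // x ∈ V} → Fin (2 * d)) : Stable V (toConfig η) := by
  intro z hz
  rw [show z = (⟨z, hz⟩ : {x // x ∈ V}).1 from rfl, toConfig_coe]
  have := (η ⟨z, hz⟩).2
  omega

lemma toConfig_zero_off (η : {x // x ∈ V} → Fin (2 * d)) : ∀ z, z ∉ V → toConfig η z = 0 := by
  intro z hz
  simp [toConfig, dif_neg hz]

lemma applyList_zero_off {η : Config d} {l : List (Site d)} (h : ∀ z, z ∉ V → η z = 0) :
    ∀ z, z ∉ V → applyList V l η z = 0 := by
  intro z hz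
  simp only [applyList]
  have : ∀ w, lapV V w z = 0 := by
    intro w
    rw [lapV, if_neg (fun hc => hz hc.2)]
  have hmap : l.map (fun w => lapV V w z) = l.map (fun _ => (0 : ℤ)) := by
    apply List.map_congr_left
    intro a _
    exact this a
  rw [hmap, h z hz]
  simp

lemma addGrain_zero_off {η : Config d} {x : Site d} (hx : x ∈ V) (h : ∀ z, z ∉ V → η z = 0) :
    ∀ z, z ∉ V → addGrain x η z = 0 := by
  intro z hz
  have : z ≠ x := fun hc => hz (hc ▸ hx)
  simp [addGrain, this, h z hz]

end Trans

section MinPrinciple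
variable {d : ℕ} {V : Finset (Site d)}

/-- discrete minimum principle: a function vanishing off `V` whose Laplacian is
nonnegative on `V` is nonnegative -/
lemma min_principle {F : Type*} [Field F] [LinearOrder F] [IsStrictOrderedRing F] (hd : 0 < d) (V : Finset (Site d))
    (v : Site d → F) (h0 : ∀ z, z ∉ V → v z = 0)
    (hsup : ∀ z ∈ V, ∑ w ∈ V.filter (fun w => adjacent z w), v w ≤ 2 * d * v z) :
    ∀ z, 0 ≤ v z := by
  by_contra hc
  push_neg at hc
  obtain ⟨z1, hz1⟩ := hc
  have hz1V : z1 ∈ V := by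
    by_contra h
    rw [h0 z1 h] at hz1
    exact absurd hz1 (lt_irrefl 0)
  obtain ⟨z0, hz0V, hmin⟩ := V.exists_min_image v ⟨z1, hz1V⟩
  have hm : v z0 < 0 := lt_of_le_of_lt (hmin z1 hz1V) hz1
  set T := V.filter (fun w => v w = v z0) with hT
  have hstep : ∀ t ∈ T, step hd t ∈ T := by
    intro t ht
    rw [hT, Finset.mem_filter] at ht
    obtain ⟨htV, htv⟩ := ht
    set N := V.filter (fun w => adjacent t w) with hN
    have hNadj : ∀ w ∈ N, adjacent t w := fun w hw => (Finset.mem_filter.1 hw).2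
    have hNcard : N.card ≤ 2 * d := card_adj_le hd t N hNadj
    have hle : ∑ w ∈ N, v w ≤ 2 * d * v z0 := htv ▸ hsup t htV
    have hge : (N.card : F) * v z0 ≤ ∑ w ∈ N, v w := by
      have := Finset.card_nsmul_le_sum N v (v z0)
        (fun w hw => hmin w (Finset.mem_filter.1 hw).1)
      simpa [nsmul_eq_mul] using this
    have hcast : (N.card : F) ≤ (2 * d : F) := by exact_mod_cast hNcard
    have hc1 : (2 * d : F) * v z0 ≤ (N.card : F) * v z0 :=
      mul_le_mul_of_nonpos_right hcast hm.le
    have heq1 : ∑ w ∈ N, v w = (N.card : F) * v z0 := le_antisymm (by linarith) hge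
    have hNcard_eq : (N.card : F) = (2 * d : F) := by
      have h' : (N.card : F) * v z0 = (2 * d : F) * v z0 := by linarith
      exact mul_right_cancel₀ hm.ne h'
    have hall : ∀ w ∈ N, v w = v z0 := by
      by_contra hcc
      push_neg at hcc
      obtain ⟨w1, hw1, hw1v⟩ := hcc
      have hlt : ∑ w ∈ N, v z0 < ∑ w ∈ N, v w := by
        apply Finset.sum_lt_sum
        · intro w hw; exact hmin w (Finset.mem_filter.1 hw).1
        · exact ⟨w1, hw1, lt_of_le_of_ne (hmin w1 (Finset.mem_filter.1 hw1).1)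
            (fun hcc' => hw1v hcc'.symm)⟩
      rw [Finset.sum_const, nsmul_eq_mul, heq1] at hlt
      exact absurd hlt (lt_irrefl _)
    have hstV : step hd t ∈ V := by
      by_contra hcc
      have : step hd t ∉ N := fun hc' => hcc (Finset.mem_filter.1 hc').1
      have := card_adj_lt hd t N hNadj this
      have : (N.card : F) < (2 * d : F) := by exact_mod_cast this
      rw [hNcard_eq] at this
      exact absurd this (lt_irrefl _)
    have hstN : step hd t ∈ N := Finset.mem_filter.2 ⟨hstV, adjacent_step hd t⟩
    rw [hT, Finset.mem_filter]
    exact ⟨hstV, hall _ hstN⟩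
  exact no_step_closed hd T ⟨z0, Finset.mem_filter.2 ⟨hz0V, rfl⟩⟩ hstep

/-- the restricted Laplacian matrix over a field -/
noncomputable def lapMatF (F : Type*) [Field F] {d : ℕ} (V : Finset (Site d)) :
    Matrix {x // x ∈ V} {x // x ∈ V} F := fun a b => ((lap d a.1 b.1 : ℤ) : F)

/-- extension of a vector on `V` to all sites -/
noncomputable def extV {F : Type*} [Field F] {d : ℕ} (V : Finset (Site d))
    (v0 : {x // x ∈ V} → F) : Site d → F :=
  fun z => if h : z ∈ V then v0 ⟨z, h⟩ else 0

lemma lapMat_mulVec {F : Type*} [Field F] (V : Finset (Site d)) (v0 : {x // x ∈ V} → F)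
    (a : {x // x ∈ V}) :
    (lapMatF F V).mulVec v0 a = ∑ w ∈ V, ((lap d a.1 w : ℤ) : F) * extV V v0 w := by
  have h := Finset.sum_coe_sort V (fun w => ((lap d a.1 w : ℤ) : F) * extV V v0 w)
  rw [← h]
  unfold Matrix.mulVec dotProduct lapMatF
  apply Finset.sum_congr rfl
  intro b _
  congr 1
  simp only [extV, dif_pos b.2]

lemma lapMat_det_ne_zero {F : Type*} [Field F] [LinearOrder F] [IsStrictOrderedRing F] (hd : 0 < d) (V : Finset (Site d)) :
    (lapMatF F V).det ≠ 0 := by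
  intro hdet
  obtain ⟨v0, hv0, hmv⟩ := (Matrix.exists_mulVec_eq_zero_iff).2 hdet
  have key : ∀ s : F, s = 1 ∨ s = -1 → ∀ z, 0 ≤ s * extV V v0 z := by
    intro s hs
    apply min_principle hd V (fun z => s * extV V v0 z)
    · intro z hz
      show s * extV V v0 z = 0
      rw [extV, dif_neg hz, mul_zero]
    · intro z hz
      have h1 : ((lapMatF F V).mulVec v0) ⟨z, hz⟩ = 0 := by rw [hmv]; rfl
      have h2 : ∑ w ∈ V, ((lap d z w : ℤ) : F) * extV V v0 w = 0 :=
        (lapMat_mulVec V v0 ⟨z, hz⟩).symm.trans h1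
      have h3 := sum_lap_split (R := F) V hz (extV V v0)
      rw [h2] at h3
      have hsum : ∑ w ∈ V.filter (fun w => adjacent z w), extV V v0 w
          = 2 * d * extV V v0 z := by linarith
      show ∑ w ∈ V.filter (fun w => adjacent z w), s * extV V v0 w
          ≤ 2 * d * (s * extV V v0 z)
      rw [← Finset.mul_sum, hsum]
      exact le_of_eq (by ring)
  have hzero : ∀ z, extV V v0 z = 0 := by
    intro z
    have hp := key 1 (Or.inl rfl) z
    have hn := key (-1) (Or.inr rfl) z
    rw [one_mul] at hp
    nlinarith
  apply hv0
  funext b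
  have := hzero b.1
  rw [extV, dif_pos b.2] at this
  simpa using this

end MinPrinciple

section KM
variable {d : ℕ}

lemma exists_km (hd : 0 < d) (V : Finset (Site d)) {x : Site d} (hx : x ∈ V) :
    ∃ (k : ℕ) (m : Site d → ℕ), 0 < k ∧ (∀ w, w ∉ V → m w = 0) ∧
      (∀ z, ∑ w ∈ V, (m w : ℤ) * lapV V w z = (k : ℤ) * (if z = x then 1 else 0)) := by
  classical
  have hdet := lapMat_det_ne_zero (F := ℚ) hd V
  set M := lapMatF ℚ V with hM
  set e : {w // w ∈ V} → ℚ := fun a => if a = ⟨x, hx⟩ then 1 else 0 with he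
  set v0 : {w // w ∈ V} → ℚ := M⁻¹.mulVec e with hv0def
  have hMv : M.mulVec v0 = e := by
    rw [hv0def, Matrix.mulVec_mulVec, Matrix.mul_nonsing_inv _ (isUnit_iff_ne_zero.2 hdet),
      Matrix.one_mulVec]
  have hv0nn : ∀ z, 0 ≤ extV V v0 z := by
    apply min_principle hd V (extV V v0) (fun z hz => by rw [extV, dif_neg hz])
    intro z hz
    have h2 : ∑ w ∈ V, ((lap d z w : ℤ) : ℚ) * extV V v0 w = e ⟨z, hz⟩ :=
      (lapMat_mulVec V v0 ⟨z, hz⟩).symm.trans (congrFun hMv _)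
    have h3 := sum_lap_split (R := ℚ) V hz (extV V v0)
    rw [h2] at h3
    have hee : (0 : ℚ) ≤ e ⟨z, hz⟩ := by
      rw [he]
      dsimp only
      split <;> norm_num
    linarith
  set k : ℕ := ∏ b : {w // w ∈ V}, (v0 b).den with hk0
  have hk : 0 < k := Finset.prod_pos (fun b _ => (v0 b).pos)
  have hdvd : ∀ b : {w // w ∈ V}, (v0 b).den ∣ k :=
    fun b => Finset.dvd_prod_of_mem _ (Finset.mem_univ b)
  have hint : ∀ b, ∃ n : ℕ, ((n : ℚ)) = (k : ℚ) * v0 b := by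
    intro b
    obtain ⟨c, hc⟩ := hdvd b
    have hden : ((v0 b).den : ℚ) ≠ 0 := Nat.cast_ne_zero.2 (v0 b).den_nz
    have hq : (k : ℚ) * v0 b = ((c : ℚ)) * ((v0 b).num : ℚ) := by
      rw [hc]
      nth_rewrite 2 [← Rat.num_div_den (v0 b)]
      push_cast
      field_simp
    have hnn : 0 ≤ v0 b := by
      have h' := hv0nn b.1
      rw [extV, dif_pos b.2] at h'
      exact h'
    have hnum : 0 ≤ (v0 b).num := Rat.num_nonneg.2 hnn
    refine ⟨c * (v0 b).num.toNat, ?_⟩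
    rw [hq]
    have hzq : ((c * (v0 b).num.toNat : ℕ) : ℤ) = (c : ℤ) * (v0 b).num := by
      push_cast [Int.toNat_of_nonneg hnum]
      ring
    exact_mod_cast hzq
  choose nm hnm using hint
  refine ⟨k, fun w => if h : w ∈ V then nm ⟨w, h⟩ else 0, hk, fun w hw => dif_neg hw, ?_⟩
  intro z
  by_cases hz : z ∈ V
  · have h2 : ∑ w ∈ V, ((lap d z w : ℤ) : ℚ) * extV V v0 w = e ⟨z, hz⟩ :=
      (lapMat_mulVec V v0 ⟨z, hz⟩).symm.trans (congrFun hMv _)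
    have h4 : ∑ w ∈ V, (((if h : w ∈ V then (nm ⟨w, h⟩ : ℕ) else 0 : ℕ)) : ℚ)
          * ((lapV V w z : ℤ) : ℚ)
        = (k : ℚ) * e ⟨z, hz⟩ := by
      rw [← h2, Finset.mul_sum]
      apply Finset.sum_congr rfl
      intro w hw
      have hl : ((lapV V w z : ℤ) : ℚ) = ((lap d z w : ℤ) : ℚ) := by
        rw [lapV, if_pos (And.intro hw hz), lap_symm]
      rw [hl, dif_pos hw, extV, dif_pos hw]
      rw [show v0 ⟨w, hw⟩ = ((nm ⟨w, hw⟩ : ℚ)) / (k : ℚ) from by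
        rw [hnm ⟨w, hw⟩]
        field_simp]
      field_simp
    have h5 : e ⟨z, hz⟩ = (((if z = x then (1 : ℤ) else 0) : ℤ) : ℚ) := by
      rw [he]
      dsimp only
      by_cases hzx : z = x
      · rw [if_pos (Subtype.ext hzx), if_pos hzx]; norm_num
      · rw [if_neg (fun hc => hzx (congrArg Subtype.val hc)), if_neg hzx]; norm_num
    rw [h5] at h4
    exact_mod_cast h4
  · rw [Finset.sum_eq_zero (fun w hw => by
        rw [lapV, if_neg (fun hc : w ∈ V ∧ z ∈ V => hz hc.2), mul_zero]),
      if_neg (fun hc : z = x => hz (hc ▸ hx)), mul_zero]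
end KM

section Levelset
variable {d : ℕ}

lemma sum_lap_card (A : Finset (Site d)) (z : Site d) (hz : z ∉ A) :
    ∑ w ∈ A, lap d z w = -(((A.filter (fun w => adjacent z w)).card : ℤ)) := by
  rw [Finset.sum_congr rfl (fun w hw =>
    lap_of_ne (fun hc : z = w => hz (hc ▸ hw)))]
  rw [Finset.sum_ite, Finset.sum_const, Finset.sum_const_zero, add_zero, nsmul_eq_mul]
  ring

lemma levelset (hd : 0 < d) (V : Finset (Site d)) {etac zeta : Config d} (u : Site d → ℤ)
    (hu0 : ∀ w, 0 ≤ u w) (husup : ∀ w, w ∉ V → u w = 0)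
    (hzeta : Stable V zeta)
    (heq : ∀ z, zeta z = etac z + ∑ w ∈ V, u w * lapV V w z)
    (hrec : Allowed V etac) : ∀ w, u w = 0 := by
  by_contra hcon
  push_neg at hcon
  obtain ⟨w0, hw0⟩ := hcon
  have hw0V : w0 ∈ V := by
    by_contra h
    exact hw0 (husup w0 h)
  have hw01 : 1 ≤ u w0 := by have := hu0 w0; omega
  obtain ⟨zU, hzUV, hmax⟩ := V.exists_max_image u ⟨w0, hw0V⟩
  set U := u zU with hUdef
  have hU1 : 1 ≤ U := le_trans hw01 (hmax w0 hw0V)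
  set S := V.filter (fun w => u w = U) with hSdef
  have hSsub : ↑S ⊆ (V : Set (Site d)) := by
    intro w hw
    exact Finset.mem_coe.2 (Finset.mem_filter.1 (Finset.mem_coe.1 hw)).1
  have hSne : S.Nonempty := ⟨zU, Finset.mem_filter.2 ⟨hzUV, rfl⟩⟩
  obtain ⟨z, hzS, hb⟩ := hrec S hSsub hSne
  apply hb
  have hzV : z ∈ V := (Finset.mem_filter.1 hzS).1
  have huz : u z = U := (Finset.mem_filter.1 hzS).2
  -- rewrite the heq sum
  have hs1 : ∑ w ∈ V, u w * lapV V w z = ∑ w ∈ V, ((lap d z w : ℤ) : ℤ) * u w := by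
    apply Finset.sum_congr rfl
    intro w hw
    rw [lapV, if_pos (And.intro hw hzV), lap_symm w z]
    push_cast
    ring
  have hs2 := sum_lap_split (R := ℤ) V hzV u
  simp only [Int.cast_id] at hs2
  set N := V.filter (fun w => adjacent z w) with hNdef
  have hNadj : ∀ w ∈ N, adjacent z w := fun w hw => (Finset.mem_filter.1 hw).2
  have hNle : N.card ≤ 2 * d := card_adj_le hd z N hNadj
  set A := N.filter (fun w => u w = U) with hAdef
  set B := N.filter (fun w => ¬ u w = U) with hBdef
  have hab : A.card + B.card = N.card :=
    Finset.card_filter_add_card_filter_not (fun w => u w = U)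
  have hsumA : ∑ w ∈ A, u w = (A.card : ℤ) * U := by
    rw [Finset.sum_congr rfl (fun w hw => (Finset.mem_filter.1 hw).2), Finset.sum_const,
      nsmul_eq_mul]
  have hsumB : ∑ w ∈ B, u w ≤ (B.card : ℤ) * (U - 1) := by
    have := Finset.sum_le_card_nsmul B u (U - 1) (fun w hw => by
      have hwV : w ∈ V := (Finset.mem_filter.1 ((Finset.mem_filter.1 hw).1)).1
      have h1 := hmax w hwV
      have h2 := (Finset.mem_filter.1 hw).2
      omega)
    simpa [nsmul_eq_mul] using this
  have hsplit : ∑ w ∈ A, u w + ∑ w ∈ B, u w = ∑ w ∈ N, u w :=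
    Finset.sum_filter_add_sum_filter_not N (fun w => u w = U) u
  -- the target bound
  have hzSE : z ∉ S.erase z := fun hc => (Finset.mem_erase.1 hc).1 rfl
  have hSA : S.filter (fun w => adjacent z w) = A := by
    rw [hAdef, hNdef, hSdef]
    ext w
    simp only [Finset.mem_filter]
    tauto
  have hcard : ∑ w ∈ S.erase z, lap d z w = -((A.card : ℤ)) := by
    rw [sum_lap_card _ _ hzSE, filter_adj_erase S z, hSA]
  rw [hcard]
  -- the height bound
  have hval := heq z
  rw [hs1] at hval
  have hstab := hzeta z hzV
  have hable : (A.card : ℤ) + B.card ≤ 2 * d := by exact_mod_cast hab ▸ hNle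
  have hkey : etac z ≤ 2 * d - 2 * d * U + ((A.card : ℤ) * U + (B.card : ℤ) * (U - 1)) := by
    have h5 : ∑ w ∈ V, ((lap d z w : ℤ) : ℤ) * u w = 2 * d * U - ∑ w ∈ N, u w := by
      rw [hs2]
      push_cast
      rw [huz]
    rw [h5] at hval
    have h6 : ∑ w ∈ N, u w ≤ (A.card : ℤ) * U + (B.card : ℤ) * (U - 1) := by
      rw [← hsplit]
      omega
    omega
  have hfin : etac z ≤ (A.card : ℤ) := by
    nlinarith [mul_nonneg (sub_nonneg.2 hU1)
      (sub_nonneg.2 hable : (0:ℤ) ≤ 2 * d - ((A.card : ℤ) + B.card))]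
  omega

lemma exists_recurrent (hd : 0 < d) (V : Finset (Site d)) :
    ∃ η : {z // z ∈ V} → Fin (2 * d), RecurrentOn V η := by
  refine ⟨fun _ => ⟨2 * d - 1, by omega⟩, ?_⟩
  rw [recurrentOn_iff_allowed]
  intro S hS hne
  obtain ⟨z, hzS, hmaxz⟩ := S.exists_max_image (fun w => w ⟨0, hd⟩) hne
  refine ⟨z, hzS, ?_⟩
  have hzV : z ∈ V := hS (Finset.mem_coe.2 hzS)
  have hstep : step hd z ∉ S := by
    intro hc
    have := hmaxz _ hc
    simp [step] at this
  have hcardlt : (S.filter (fun w => adjacent z w)).card < 2 * d :=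
    card_adj_lt hd z _ (fun w hw => (Finset.mem_filter.1 hw).2)
      (fun hc => hstep (Finset.mem_filter.1 hc).1)
  have hzSE : z ∉ S.erase z := fun hc => (Finset.mem_erase.1 hc).1 rfl
  rw [sum_lap_card _ _ hzSE, filter_adj_erase S z]
  have hht : toConfig (V := V) (fun _ => (⟨2 * d - 1, by omega⟩ : Fin (2 * d))) z
      = 2 * d := by
    rw [toConfig, dif_pos hzV]
    show ((2 * d - 1 : ℕ) : ℤ) + 1 = 2 * d
    push_cast
    omega
  rw [hht]
  have hc2 : ((S.filter (fun w => adjacent z w)).card : ℤ) < 2 * d := by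
    exact_mod_cast hcardlt
  omega
end Levelset

section Phi
variable {d : ℕ}

lemma count_flatMap_replicate {α : Type*} [DecidableEq α] (m : α → ℕ) :
    ∀ (lst : List α), lst.Nodup → ∀ z, (lst.flatMap (fun w => List.replicate (m w) w)).count z
      = if z ∈ lst then m z else 0 := by
  intro lst
  induction lst with
  | nil => intro _ z; simp
  | cons a t ih =>
    intro hnd z
    rw [List.flatMap_cons, List.count_append, List.count_replicate,
      ih (List.Nodup.of_cons hnd)]
    by_cases hz : z = a
    · subst hz
      have hzt : z ∉ t := (List.nodup_cons.1 hnd).1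
      simp [hzt]
    · simp [hz, Ne.symm hz, List.mem_cons]

variable (hd : 0 < d) (V : Finset (Site d)) (x : Site d)
  (N : ({z // z ∈ V} → Fin (2 * d)) → Site d → ℕ)
  (hN : ∀ η, RecurrentOn V η → ∃ (l : List (Site d)) (ξ : Config d),
      LegalSeq V (addGrain x (toConfig η)) l ξ ∧ Stable V ξ ∧ ∀ z, N η z = l.count z)

/-- the map "add a grain at `x` and stabilize", via choice -/
noncomputable def Phi : ({z // z ∈ V} → Fin (2 * d)) → ({z // z ∈ V} → Fin (2 * d)) :=
  fun η => if h : RecurrentOn V η then encV hd V ((hN η h).choose_spec.choose) else η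

lemma Phi_spec (hx : x ∈ V) {η : {z // z ∈ V} → Fin (2 * d)} (h : RecurrentOn V η) :
    RecurrentOn V (Phi hd V x N hN η) ∧
    LegalSeq V (addGrain x (toConfig η)) (hN η h).choose (toConfig (Phi hd V x N hN η)) ∧
    (∀ z, N η z = ((hN η h).choose).count z) := by
  obtain ⟨hleg, hstab, hcnt⟩ := (hN η h).choose_spec.choose_spec
  set ξ := (hN η h).choose_spec.choose with hξdef
  have hallow0 : Allowed V (addGrain x (toConfig η)) :=
    allowed_addGrain x ((recurrentOn_iff_allowed η).1 h)
  have hallow : Allowed V ξ := allowed_legalSeq hleg hallow0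
  have hzoff : ∀ z, z ∉ V → ξ z = 0 := by
    rw [legalSeq_applyList hleg]
    exact applyList_zero_off (addGrain_zero_off hx (toConfig_zero_off η))
  have henc : toConfig (encV hd V ξ) = ξ :=
    toConfig_encV hd (allowed_one_le hallow) hstab hzoff
  have hPhi : Phi hd V x N hN η = encV hd V ξ := dif_pos h
  refine ⟨?_, ?_, hcnt⟩
  · rw [recurrentOn_iff_allowed, hPhi, henc]
    exact hallow
  · rw [hPhi, henc]
    exact hleg

lemma Phi_iter (hx : x ∈ V) {η₀ : {z // z ∈ V} → Fin (2 * d)} (h₀ : RecurrentOn V η₀) :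
    ∀ i : ℕ, RecurrentOn V ((Phi hd V x N hN)^[i] η₀) ∧
      ∃ L : List (Site d), LegalSeq V ((addGrain x)^[i] (toConfig η₀)) L
        (toConfig ((Phi hd V x N hN)^[i] η₀)) := by
  intro i
  induction i with
  | zero =>
    refine ⟨h₀, [], ?_⟩
    show toConfig η₀ = toConfig η₀
    rfl
  | succ n ih =>
    obtain ⟨hrec, L, hL⟩ := ih
    obtain ⟨hrec', hleg', -⟩ := Phi_spec hd V x N hN hx hrec
    refine ⟨?_, L ++ (hN _ hrec).choose, ?_⟩
    · rw [Function.iterate_succ_apply']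
      exact hrec'
    · rw [Function.iterate_succ_apply' (Phi hd V x N hN),
        Function.iterate_succ_apply' (addGrain x)]
      exact legalSeq_append (legalSeq_addGrain x hL) hleg'

lemma addGrain_iter (i : ℕ) (η : Config d) (z : Site d) :
    (addGrain x)^[i] η z = η z + i * (if z = x then 1 else 0) := by
  induction i with
  | zero => simp
  | succ n ih =>
    rw [Function.iterate_succ_apply' (addGrain x)]
    simp only [addGrain]
    by_cases hz : z = x
    · rw [if_pos hz, ih, if_pos hz]
      push_cast
      ring
    · rw [if_neg hz, ih, if_neg hz]
      ring

lemma Phi_id (hx : x ∈ V) :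
    ∃ k : ℕ, 0 < k ∧ ∀ η₀, RecurrentOn V η₀ → (Phi hd V x N hN)^[k] η₀ = η₀ := by
  obtain ⟨k, m, hk, hmsup, hkm⟩ := exists_km hd V hx
  refine ⟨k, hk, ?_⟩
  intro η₀ h₀
  obtain ⟨hrecK, L, hL⟩ := Phi_iter hd V x N hN hx h₀ k
  set lm := V.toList.flatMap (fun w => List.replicate (m w) w) with hlm
  have hlmcount : ∀ z, lm.count z = if z ∈ V then m z else 0 := by
    intro z
    rw [hlm, count_flatMap_replicate m V.toList V.nodup_toList z]
    by_cases hz : z ∈ V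
    · rw [if_pos (Finset.mem_toList.2 hz), if_pos hz]
    · rw [if_neg (fun hc => hz (Finset.mem_toList.1 hc)), if_neg hz]
  have hlmmem : ∀ a ∈ lm, a ∈ V := by
    intro a ha
    rw [hlm] at ha
    obtain ⟨w, hw, ha'⟩ := List.mem_flatMap.1 ha
    rw [List.eq_of_mem_replicate ha']
    exact Finset.mem_toList.1 hw
  have hsum_lm : ∀ z, ((lm.map (fun w => lapV V w z)).sum)
      = (k : ℤ) * (if z = x then 1 else 0) := by
    intro z
    rw [sum_map_count (V := V) _ lm hlmmem, ← hkm z]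
    apply Finset.sum_congr rfl
    intro w hw
    rw [hlmcount w, if_pos hw]
  have happly : applyList V lm ((addGrain x)^[k] (toConfig η₀)) = toConfig η₀ := by
    funext z
    show (addGrain x)^[k] (toConfig η₀) z - (lm.map (fun w => lapV V w z)).sum = toConfig η₀ z
    rw [hsum_lm z, addGrain_iter x k (toConfig η₀) z]
    ring
  have hstab0 : Stable V (toConfig η₀) := toConfig_stable η₀
  have hcnt : ∀ z, L.count z ≤ lm.count z :=
    least_action hL hlmmem (by rw [happly]; exact hstab0)
  set u : Site d → ℤ := fun w => (lm.count w : ℤ) - (L.count w : ℤ) with hu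
  have hu0 : ∀ w, 0 ≤ u w := by
    intro w
    have := hcnt w
    rw [hu]
    dsimp only
    omega
  have husup : ∀ w, w ∉ V → u w = 0 := by
    intro w hw
    have h1 : lm.count w = 0 := by rw [hlmcount w, if_neg hw]
    have h2 : L.count w = 0 := by
      rw [List.count_eq_zero]
      intro hc
      exact hw (legalSeq_mem hL w hc)
    rw [hu]
    dsimp only
    omega
  have happL := legalSeq_applyList hL
  have heq : ∀ z, toConfig ((Phi hd V x N hN)^[k] η₀) z
      = toConfig η₀ z + ∑ w ∈ V, u w * lapV V w z := by
    intro z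
    rw [happL]
    show (addGrain x)^[k] (toConfig η₀) z - (L.map (fun w => lapV V w z)).sum = _
    rw [sum_map_count (V := V) _ L (legalSeq_mem hL), addGrain_iter x k (toConfig η₀) z]
    have h1 : ∑ w ∈ V, u w * lapV V w z
        = (k : ℤ) * (if z = x then 1 else 0) - ∑ w ∈ V, (L.count w : ℤ) * lapV V w z := by
      rw [← hkm z, ← Finset.sum_sub_distrib]
      apply Finset.sum_congr rfl
      intro w hw
      rw [hu]
      dsimp only
      rw [hlmcount w, if_pos hw]
      ring
    rw [h1]
    ring
  have hzeta := toConfig_stable ((Phi hd V x N hN)^[k] η₀)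
  have hu_all := levelset hd V u hu0 husup hzeta heq ((recurrentOn_iff_allowed η₀).1 h₀)
  have hfin : ∀ z, toConfig ((Phi hd V x N hN)^[k] η₀) z = toConfig η₀ z := by
    intro z
    rw [heq z, Finset.sum_eq_zero (fun w _ => by rw [hu_all w, zero_mul]), add_zero]
  exact toConfig_inj (funext hfin)

end Phi

lemma sum_counts {d : ℕ} (hd : 0 < d) (V : Finset (Site d)) (x : Site d)
    (N : ({z // z ∈ V} → Fin (2 * d)) → Site d → ℕ)
    (hN : ∀ η, RecurrentOn V η → ∃ (l : List (Site d)) (ξ : Config d),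
        LegalSeq V (addGrain x (toConfig η)) l ξ ∧ Stable V ξ ∧ ∀ z, N η z = l.count z)
    (hx : x ∈ V) :
    ∀ z : Site d, ∑ w ∈ V, (∑ η ∈ Finset.univ.filter (RecurrentOn V), (N η w : ℤ)) * lapV V w z
      = ((Finset.univ.filter (RecurrentOn V)).card : ℤ) * (if z = x then 1 else 0) := by
  classical
  set R := Finset.univ.filter (RecurrentOn V) with hR
  have hmem : ∀ η, η ∈ R ↔ RecurrentOn V η := by
    intro η
    rw [hR, Finset.mem_filter]
    simp
  have hpt : ∀ η ∈ R, ∀ z, toConfig (Phi hd V x N hN η) z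
      = toConfig η z + (if z = x then 1 else 0) - ∑ w ∈ V, (N η w : ℤ) * lapV V w z := by
    intro η hη z
    have hrec := (hmem η).1 hη
    obtain ⟨-, hleg, hcnt⟩ := Phi_spec hd V x N hN hx hrec
    rw [legalSeq_applyList hleg]
    show addGrain x (toConfig η) z - (((hN η hrec).choose).map (fun w => lapV V w z)).sum = _
    rw [sum_map_count (V := V) _ _ (legalSeq_mem hleg)]
    have hsc : ∑ w ∈ V, (((hN η hrec).choose).count w : ℤ) * lapV V w z
        = ∑ w ∈ V, (N η w : ℤ) * lapV V w z := by
      apply Finset.sum_congr rfl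
      intro w _
      rw [hcnt w]
    rw [hsc]
    have hag : addGrain x (toConfig η) z = toConfig η z + (if z = x then 1 else 0) := by
      rw [addGrain]
      by_cases hz : z = x
      · simp [hz]
      · simp [hz]
    rw [hag]
  obtain ⟨k, hk, hid⟩ := Phi_id hd V x N hN hx
  have hinj : Set.InjOn (Phi hd V x N hN) R := by
    intro η hη η' hη' hPhi
    have h1 := hid η ((hmem η).1 (Finset.mem_coe.1 hη))
    have h2 := hid η' ((hmem η').1 (Finset.mem_coe.1 hη'))
    obtain ⟨k', rfl⟩ : ∃ k', k = k' + 1 := ⟨k - 1, by omega⟩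
    rw [Function.iterate_succ_apply] at h1 h2
    rw [← h1, ← h2, hPhi]
  have hmaps : ∀ η ∈ R, Phi hd V x N hN η ∈ R := by
    intro η hη
    exact (hmem _).2 (Phi_spec hd V x N hN hx ((hmem η).1 hη)).1
  have himg : R.image (Phi hd V x N hN) = R := by
    apply Finset.eq_of_subset_of_card_le
    · intro ξ hξ
      obtain ⟨η, hη, rfl⟩ := Finset.mem_image.1 hξ
      exact hmaps η hη
    · rw [Finset.card_image_of_injOn hinj]
  have hsumPhi : ∀ z, ∑ η ∈ R, toConfig (Phi hd V x N hN η) z = ∑ η ∈ R, toConfig η z := by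
    intro z
    have h' : ∑ ξ ∈ R.image (Phi hd V x N hN), toConfig ξ z
        = ∑ η ∈ R, toConfig (Phi hd V x N hN η) z :=
      Finset.sum_image (fun a ha b hb h => hinj (Finset.mem_coe.2 ha) (Finset.mem_coe.2 hb) h)
    rw [himg] at h'
    exact h'.symm
  intro z
  have hbig : ∑ η ∈ R, toConfig η z
      = ∑ η ∈ R, (toConfig η z + (if z = x then 1 else 0)
          - ∑ w ∈ V, (N η w : ℤ) * lapV V w z) := by
    rw [← hsumPhi z]
    exact Finset.sum_congr rfl (fun η hη => hpt η hη z)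
  rw [Finset.sum_sub_distrib, Finset.sum_add_distrib, Finset.sum_const, nsmul_eq_mul] at hbig
  have hswap : ∑ η ∈ R, ∑ w ∈ V, (N η w : ℤ) * lapV V w z
      = ∑ w ∈ V, (∑ η ∈ R, (N η w : ℤ)) * lapV V w z := by
    rw [Finset.sum_comm]
    apply Finset.sum_congr rfl
    intro w _
    rw [Finset.sum_mul]
  rw [hswap] at hbig
  omega


/-- Dhar's formula: the expectation, under the uniform measure on recurrent
configurations of `V`, of the number `N_V(x,y,·)` of topplings at `y` upon addition of a
grain at `x` followed by stabilization, equals `(Δ_V⁻¹)_{xy}`. -/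
theorem dhar_formula {d : ℕ} (V : Finset (Site d))
    (x y : Site d) (hx : x ∈ V) (hy : y ∈ V)
    (N : ({z // z ∈ V} → Fin (2 * d)) → Site d → ℕ)
    (hN : ∀ η, RecurrentOn V η → ∃ (l : List (Site d)) (ξ : Config d),
        LegalSeq V (addGrain x (toConfig η)) l ξ ∧ Stable V ξ ∧ ∀ z, N η z = l.count z) :
    (∑ η ∈ Finset.univ.filter (RecurrentOn V), (N η y : ℝ))
        / (Finset.univ.filter (RecurrentOn V)).card
      = (lapMatR V)⁻¹ ⟨x, hx⟩ ⟨y, hy⟩ := by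
  classical
  rcases Nat.eq_zero_or_pos d with hd0 | hd
  · subst hd0
    have hempty : Finset.univ.filter (RecurrentOn V) = ∅ :=
      Finset.eq_empty_of_forall_notMem (fun η _ => (η ⟨x, hx⟩).elim0)
    rw [hempty]
    have hmat : lapMatR V = 0 := by
      funext a b
      show ((lap 0 a.1 b.1 : ℤ) : ℝ) = 0
      rw [lap]
      by_cases hab : a.1 = b.1
      · rw [if_pos hab]; norm_num
      · rw [if_neg hab, if_neg (fun hc : adjacent a.1 b.1 => by
          unfold adjacent at hc; simp at hc)]
        norm_num
    rw [hmat, Matrix.inv_zero]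
    simp
  · set R := Finset.univ.filter (RecurrentOn V) with hR
    have hne : R.Nonempty := by
      obtain ⟨η, hη⟩ := exists_recurrent hd V
      exact ⟨η, Finset.mem_filter.2 ⟨Finset.mem_univ _, hη⟩⟩
    have hcard0 : (R.card : ℝ) ≠ 0 := Nat.cast_ne_zero.2 (Finset.card_pos.2 hne).ne'
    set M := lapMatR V with hM
    have hMF : M = lapMatF ℝ V := rfl
    have hdet : M.det ≠ 0 := by rw [hMF]; exact lapMat_det_ne_zero hd V
    have hdetu : IsUnit M.det := isUnit_iff_ne_zero.2 hdet
    set s : {z // z ∈ V} → ℝ := fun b => ∑ η ∈ R, (N η b.1 : ℝ) with hs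
    have hSC := sum_counts hd V x N hN hx
    have hMs : M.mulVec s = (R.card : ℝ) • ((Pi.single (⟨x, hx⟩ : {z // z ∈ V}) (1 : ℝ)) : {z // z ∈ V} → ℝ) := by
      funext a
      have h1 : M.mulVec s a = ∑ w ∈ V, ((lap d a.1 w : ℤ) : ℝ) * extV V s w := by
        rw [hMF]; exact lapMat_mulVec V s a
      have h3 := hSC a.1
      have h4 : ∑ w ∈ V, ((∑ η ∈ R, (N η w : ℤ) : ℤ) : ℝ) * ((lapV V w a.1 : ℤ) : ℝ)
          = ((R.card : ℕ) : ℝ) * (((if a.1 = x then (1 : ℤ) else 0) : ℤ) : ℝ) := by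
        exact_mod_cast h3
      have h5 : ∀ w ∈ V, ((lap d a.1 w : ℤ) : ℝ) * extV V s w
          = ((∑ η ∈ R, (N η w : ℤ) : ℤ) : ℝ) * ((lapV V w a.1 : ℤ) : ℝ) := by
        intro w hw
        have he : extV V s w = ((∑ η ∈ R, (N η w : ℤ) : ℤ) : ℝ) := by
          rw [extV, dif_pos hw]
          show ∑ η ∈ R, (N η w : ℝ) = _
          push_cast
          rfl
        have hl : ((lapV V w a.1 : ℤ) : ℝ) = ((lap d a.1 w : ℤ) : ℝ) := by
          rw [lapV, if_pos (And.intro hw a.2), lap_symm]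
        rw [he, hl]
        ring
      rw [h1, Finset.sum_congr rfl h5, h4]
      simp only [Pi.smul_apply, Pi.single_apply, smul_eq_mul]
      by_cases hax : a = (⟨x, hx⟩ : {z // z ∈ V})
      · rw [if_pos hax, if_pos (by rw [hax])]
        norm_num
      · rw [if_neg (fun hc : a.1 = x => hax (Subtype.ext hc)), if_neg hax]
        norm_num
    have h6 : M⁻¹.mulVec (M.mulVec s) = s := by
      rw [Matrix.mulVec_mulVec, Matrix.nonsing_inv_mul _ hdetu, Matrix.one_mulVec]
    have hsy : s = fun b => (R.card : ℝ) * M⁻¹ b ⟨x, hx⟩ := by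
      rw [← h6, hMs, Matrix.mulVec_smul, Matrix.mulVec_single]
      funext b
      simp [mul_one]
    have hyval : s ⟨y, hy⟩ = (R.card : ℝ) * M⁻¹ ⟨y, hy⟩ ⟨x, hx⟩ := by rw [hsy]
    have hMt : M.transpose = M := by
      funext a b
      show ((lap d b.1 a.1 : ℤ) : ℝ) = ((lap d a.1 b.1 : ℤ) : ℝ)
      rw [lap_symm]
    have hsymm : M⁻¹ ⟨y, hy⟩ ⟨x, hx⟩ = M⁻¹ ⟨x, hx⟩ ⟨y, hy⟩ := by
      have ht := Matrix.transpose_nonsing_inv M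
      rw [hMt] at ht
      have := congrFun (congrFun ht ⟨x, hx⟩) ⟨y, hy⟩
      rw [← this]
      rfl
    show (∑ η ∈ R, (N η y : ℝ)) / R.card = M⁻¹ ⟨x, hx⟩ ⟨y, hy⟩
    have hsv : ∑ η ∈ R, (N η y : ℝ) = s ⟨y, hy⟩ := rfl
    rw [hsv, hyval, hsymm]
    field_simp
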